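/- For every integer n ≥ 2, the map f on the vertex set of G_n defined by f(a,b,j) = (a,b,j+1) is an automorphism of G_n, i.e., a bijection from the vertices of G_n to themselves such that two vertices are adjacent if and only if their images are adjacent. -/

import Mathlib

open SimpleGraph

/-- Vertex set of the graph `Gₙ`: `ℤ₂ × ℤ₂ × ℤ_{2n}`. -/
abbrev GnV (n : ℕ) : Type := ZMod 2 × ZMod 2 × ZMod (2 * n)

/-- The prescribed neighborhood of the vertex `(a, b, j)` in `Gₙ`. -/
def nbhd (n : ℕ) (v : GnV n) : Set (GnV n) :=
  {(1 - v.1, 1 - v.2.1, v.2.2),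
   (v.1, 1 - v.2.1, v.2.2),
   (v.1, v.1 + v.2.1, v.2.2 - 1),
   (v.1, v.1 + v.2.1, v.2.2 + 1),
   (1 - v.1, v.1 + v.2.1, v.2.2 + if v.1 = 0 then 2 else -2)}

/-- The graph `Gₙ` on `ℤ₂ × ℤ₂ × ℤ_{2n}`, where the neighborhood of `(a,b,j)` is exactly
`{(1-a,1-b,j), (a,1-b,j), (a,a+b,j-1), (a,a+b,j+1), (1-a,a+b,j+2(-1)^a)}`
(this relation is symmetric, and for `n ≥ 2` no vertex lies in its own neighborhood). -/
def Gn (n : ℕ) : SimpleGraph (GnV n) where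
  Adj u v := u ≠ v ∧ (u ∈ nbhd n v ∨ v ∈ nbhd n u)
  symm := by
    constructor
    intro u v h
    exact ⟨Ne.symm h.1, h.2.symm⟩
  loopless := by
    constructor
    intro u h
    exact h.1 rfl

lemma mem_shift (n : ℕ) (u v : GnV n) :
    u ∈ nbhd n v ↔ ((u.1, u.2.1, u.2.2 + 1) : GnV n) ∈ nbhd n (v.1, v.2.1, v.2.2 + 1) := by
  simp only [nbhd, Set.mem_insert_iff, Set.mem_singleton_iff, Prod.mk.injEq, Prod.ext_iff]
  constructor <;>
    rintro (⟨h1, h2, h3⟩ | ⟨h1, h2, h3⟩ | ⟨h1, h2, h3⟩ | ⟨h1, h2, h3⟩ | ⟨h1, h2, h3⟩) <;>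
    [ exact Or.inl ⟨h1, h2, by linear_combination h3⟩;
      exact Or.inr (Or.inl ⟨h1, h2, by linear_combination h3⟩);
      exact Or.inr (Or.inr (Or.inl ⟨h1, h2, by linear_combination h3⟩));
      exact Or.inr (Or.inr (Or.inr (Or.inl ⟨h1, h2, by linear_combination h3⟩)));
      exact Or.inr (Or.inr (Or.inr (Or.inr ⟨h1, h2, by linear_combination h3⟩)));
      exact Or.inl ⟨h1, h2, by linear_combination h3⟩;
      exact Or.inr (Or.inl ⟨h1, h2, by linear_combination h3⟩);
      exact Or.inr (Or.inr (Or.inl ⟨h1, h2, by linear_combination h3⟩));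
      exact Or.inr (Or.inr (Or.inr (Or.inl ⟨h1, h2, by linear_combination h3⟩)));
      exact Or.inr (Or.inr (Or.inr (Or.inr ⟨h1, h2, by linear_combination h3⟩)))]

/-- The map `f(a,b,j) = (a,b,j+1)` is an automorphism of `Gₙ`: a bijection of the vertex set
such that two vertices are adjacent iff their images are adjacent. -/
theorem f_is_automorphism (n : ℕ) (hn : 2 ≤ n) :
    let f : GnV n → GnV n := fun v => (v.1, v.2.1, v.2.2 + 1)
    Function.Bijective f ∧ ∀ u v : GnV n, (Gn n).Adj u v ↔ (Gn n).Adj (f u) (f v) := by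
  intro f
  have hinj : Function.Injective f := by
    intro u v h
    simp only [f, Prod.mk.injEq] at h
    exact Prod.ext h.1 (Prod.ext h.2.1 (by have := h.2.2; exact add_right_cancel this))
  refine ⟨⟨hinj, fun v => ⟨(v.1, v.2.1, v.2.2 - 1), by simp [f]⟩⟩, fun u v => ?_⟩
  constructor
  · rintro ⟨hne, h⟩
    refine ⟨fun h' => hne (hinj h'), ?_⟩
    rcases h with h | h
    · exact Or.inl ((mem_shift n u v).mp h)
    · exact Or.inr ((mem_shift n v u).mp h)
  · rintro ⟨hne, h⟩
    refine ⟨fun h' => hne (by rw [h']), ?_⟩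
    rcases h with h | h
    · exact Or.inl ((mem_shift n u v).mpr h)
    · exact Or.inr ((mem_shift n v u).mpr h)
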